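/- arXiv:1011.0700 — 4 statements merged into one kernel-verified Lean document; each statement's English description precedes it below -/
import Mathlib

section
/- For c = cosh t with t > 0, every point in the orbit {T_c^n(0,0) : n ∈ ℤ} lies on a hyperbola: there is an invertible affine map of ℝ² sending T_c^n(0,0) to (cosh(nt), sinh(nt)) for all n ∈ ℤ. -/
def TcPerm (c : ℝ) : Equiv.Perm (ℝ × ℝ) where
  toFun p := (c * p.1 + (c - 1) * p.2 + 1, (c + 1) * p.1 + c * p.2 + 1)
  invFun p := (c * p.1 + (1 - c) * p.2 - 1, -(c + 1) * p.1 + c * p.2 + 1)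
  left_inv p := by
    obtain ⟨x, y⟩ := p
    simp only [Prod.mk.injEq]
    constructor <;> ring
  right_inv p := by
    obtain ⟨x, y⟩ := p
    simp only [Prod.mk.injEq]
    constructor <;> ring

/-- For `c = cosh t` with `t > 0`, there is an invertible affine map of ℝ² sending the
orbit point `T_c^n(0,0)` to `(cosh (n t), sinh (n t))` for every integer `n`; in particular
the orbit lies on a hyperbola. -/
theorem stmt2 (t : ℝ) (ht : 0 < t) :
    ∃ a b d e : ℝ, ∃ v : ℝ × ℝ, a * e - b * d ≠ 0 ∧
      ∀ n : ℤ, (fun p : ℝ × ℝ => (a * p.1 + b * p.2 + v.1, d * p.1 + e * p.2 + v.2))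
          ((TcPerm (Real.cosh t) ^ n) ((0 : ℝ), (0 : ℝ)))
        = (Real.cosh (n * t), Real.sinh (n * t)) := by
  set c := Real.cosh t with hc
  set s := Real.sinh t with hs
  have hs0 : 0 < s := by rw [hs]; exact Real.sinh_pos_iff.mpr ht
  have hc1 : 1 < c := Real.one_lt_cosh.mpr (ne_of_gt ht)
  have hsq : c ^ 2 - s ^ 2 = 1 := Real.cosh_sq_sub_sinh_sq t
  have key : ∀ n : ℤ, ((TcPerm c ^ n) ((0:ℝ),(0:ℝ))).1 * s = Real.sinh (n*t) ∧
      ((TcPerm c ^ n) ((0:ℝ),(0:ℝ))).2 * (c-1) = Real.cosh (n*t) - 1 := by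
    intro n
    induction n using Int.induction_on with
    | zero => simp
    | succ k ih =>
      obtain ⟨ih1, ih2⟩ := ih
      have h1 : (TcPerm c ^ ((k:ℤ)+1)) ((0:ℝ),(0:ℝ))
          = TcPerm c ((TcPerm c ^ (k:ℤ)) ((0:ℝ),(0:ℝ))) := by
        rw [add_comm, zpow_one_add, Equiv.Perm.mul_apply]
      have harg : (((k:ℤ)+1 : ℤ) : ℝ) * t = ((k:ℤ):ℝ) * t + t := by push_cast; ring
      rw [h1, harg, Real.sinh_add, Real.cosh_add]
      set x := ((TcPerm c ^ (k:ℤ)) ((0:ℝ),(0:ℝ))).1 with hx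
      set y := ((TcPerm c ^ (k:ℤ)) ((0:ℝ),(0:ℝ))).2 with hy
      constructor
      · show (c * x + (c - 1) * y + 1) * s = _
        linear_combination c * ih1 + s * ih2
      · show ((c + 1) * x + c * y + 1) * (c-1) = _
        linear_combination s * ih1 + c * ih2 + x * hsq
    | pred k ih =>
      obtain ⟨ih1, ih2⟩ := ih
      have h1 : (TcPerm c ^ (-(k:ℤ)-1)) ((0:ℝ),(0:ℝ))
          = (TcPerm c)⁻¹ ((TcPerm c ^ (-(k:ℤ))) ((0:ℝ),(0:ℝ))) := by
        rw [show (-(k:ℤ)-1) = (-1) + (-(k:ℤ)) by ring, zpow_add, zpow_neg_one,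
          Equiv.Perm.mul_apply]
      have harg : ((-(k:ℤ)-1 : ℤ) : ℝ) * t = ((-(k:ℤ)):ℝ) * t - t := by push_cast; ring
      rw [h1, harg, Real.sinh_sub, Real.cosh_sub]
      set x := ((TcPerm c ^ (-(k:ℤ))) ((0:ℝ),(0:ℝ))).1 with hx
      set y := ((TcPerm c ^ (-(k:ℤ))) ((0:ℝ),(0:ℝ))).2 with hy
      push_cast at ih1 ih2 ⊢
      constructor
      · show (c * x + (1 - c) * y - 1) * s = _
        linear_combination c * ih1 - s * ih2
      · show (-(c + 1) * x + c * y + 1) * (c-1) = _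
        linear_combination -s * ih1 + c * ih2 - x * hsq
  refine ⟨0, c - 1, s, 0, (1, 0), ?_, ?_⟩
  · have : c - 1 > 0 := by linarith
    nlinarith
  · intro n
    obtain ⟨k1, k2⟩ := key n
    simp only [Prod.mk.injEq]
    constructor
    · linarith [k2]
    · linarith [k1]
end

section
/- The affine map U(x,y) = (-c x + (c-1) y + 1, -(c+1) x + c y + 1) satisfies U ∘ T_c ∘ U⁻¹ = T_c⁻¹ and U is an involution; consequently U swaps the orbit points P_i = T_c^i(0,0) and P_{1-i} for every integer i. -/
/-- The affine map `U(x,y) = (-cx + (c-1)y + 1, -(c+1)x + cy + 1)`. -/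
def Umap (c : ℝ) (p : ℝ × ℝ) : ℝ × ℝ :=
  (-c * p.1 + (c - 1) * p.2 + 1, -(c + 1) * p.1 + c * p.2 + 1)

lemma Umap_invol (c : ℝ) (p : ℝ × ℝ) : Umap c (Umap c p) = p := by
  obtain ⟨x, y⟩ := p
  simp only [Umap, Prod.mk.injEq]
  constructor <;> ring

/-- `U` as a permutation. -/
def Uperm (c : ℝ) : Equiv.Perm (ℝ × ℝ) :=
  ⟨Umap c, Umap c, Umap_invol c, Umap_invol c⟩

lemma Uperm_conj (c : ℝ) : Uperm c * TcPerm c * (Uperm c)⁻¹ = (TcPerm c)⁻¹ := by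
  ext p
  · obtain ⟨x, y⟩ := p
    simp only [Equiv.Perm.mul_apply, Uperm, TcPerm, Umap, Equiv.coe_fn_mk,
      Equiv.Perm.inv_def, Equiv.coe_fn_symm_mk]
    ring
  · obtain ⟨x, y⟩ := p
    simp only [Equiv.Perm.mul_apply, Uperm, TcPerm, Umap, Equiv.coe_fn_mk,
      Equiv.Perm.inv_def, Equiv.coe_fn_symm_mk]
    ring

/-- `U` is an involution, conjugates `T_c` to its inverse (so `U ∘ T_c ∘ U⁻¹ = T_c⁻¹`),
and consequently swaps the orbit points `P_i = T_c^i(0,0)` and `P_{1-i}`. -/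
theorem stmt4 (c : ℝ) :
    (∀ p : ℝ × ℝ, Umap c (Umap c p) = p) ∧
      (∀ p : ℝ × ℝ, Umap c (TcPerm c (Umap c p)) = (TcPerm c)⁻¹ p) ∧
      ∀ i : ℤ, Umap c ((TcPerm c ^ i) ((0 : ℝ), (0 : ℝ)))
        = (TcPerm c ^ (1 - i)) ((0 : ℝ), (0 : ℝ)) := by
  have hinv : (Uperm c)⁻¹ = Uperm c := by
    ext p <;> rfl
  have hconj := Uperm_conj c
  refine ⟨Umap_invol c, ?_, ?_⟩
  · intro p
    have := congrArg (fun f : Equiv.Perm (ℝ × ℝ) => f p) hconj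
    simpa [hinv, Equiv.Perm.mul_apply, Uperm] using this
  · intro i
    have hzpow : Uperm c * TcPerm c ^ i * (Uperm c)⁻¹ = (TcPerm c)⁻¹ ^ i := by
      rw [← hconj]
      exact (conj_zpow (a := Uperm c) (b := TcPerm c)).symm
    have h0 : Uperm c ((0 : ℝ), (0 : ℝ)) = TcPerm c ((0 : ℝ), (0 : ℝ)) := by
      simp [Uperm, Umap, TcPerm]
    have key : Uperm c ((TcPerm c ^ i) ((0:ℝ), (0:ℝ)))
        = ((TcPerm c)⁻¹ ^ i) (Uperm c ((0:ℝ), (0:ℝ))) := by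
      have := congrArg (fun f : Equiv.Perm (ℝ × ℝ) => f (Uperm c ((0:ℝ),(0:ℝ)))) hzpow
      simpa [Equiv.Perm.mul_apply, Equiv.Perm.inv_def, Equiv.symm_apply_apply] using this
    have : Uperm c ((TcPerm c ^ i) ((0:ℝ), (0:ℝ)))
        = ((TcPerm c)⁻¹ ^ i * TcPerm c) ((0:ℝ), (0:ℝ)) := by
      rw [key, h0]; rfl
    rw [show (Uperm c : ℝ × ℝ → ℝ × ℝ) = Umap c from rfl] at this
    rw [this]
    congr 1
    group
end

section
/- For every integer i, the segment joining P_{1-i} = T_c^{1-i}(0,0) to P_i = T_c^i(0,0) has slope one (its displacement vector is a scalar multiple of (1,1)), provided P_{1-i} ≠ P_i. -/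
lemma tc_neg (c : ℝ) (i : ℤ) :
    (TcPerm c ^ (-i)) ((0 : ℝ), (0 : ℝ))
      = (-((TcPerm c ^ i) ((0 : ℝ), (0 : ℝ))).1, ((TcPerm c ^ i) ((0 : ℝ), (0 : ℝ))).2) := by
  induction i using Int.induction_on with
  | zero => simp
  | succ n ih =>
      have h1 : (-(↑n + 1) : ℤ) = -1 + -↑n := by ring
      have h2 : ((↑n + 1 : ℤ)) = 1 + (↑n : ℤ) := by ring
      rw [h1, h2, zpow_add, zpow_add, zpow_one, zpow_neg_one]
      simp only [Equiv.Perm.mul_apply, ih]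
      obtain ⟨x, y⟩ := (TcPerm c ^ (n : ℤ)) ((0 : ℝ), (0 : ℝ))
      simp only [TcPerm, Equiv.Perm.inv_def, Equiv.coe_fn_mk, Equiv.coe_fn_symm_mk,
        Prod.mk.injEq]
      constructor <;> ring
  | pred n ih =>
      simp only [neg_neg] at ih
      have h1 : (-(-↑n - 1) : ℤ) = 1 + (↑n : ℤ) := by ring
      have h2 : ((-↑n - 1 : ℤ)) = -1 + -(↑n : ℤ) := by ring
      rw [h1, h2, zpow_add, zpow_add, zpow_one, zpow_neg_one]
      have ih' : (TcPerm c ^ (n : ℤ)) ((0 : ℝ), (0 : ℝ))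
          = (-((TcPerm c ^ (-(n:ℤ))) ((0 : ℝ), (0 : ℝ))).1,
             ((TcPerm c ^ (-(n:ℤ))) ((0 : ℝ), (0 : ℝ))).2) := by
        exact ih
      simp only [Equiv.Perm.mul_apply, ih']
      obtain ⟨x, y⟩ := (TcPerm c ^ (-(n:ℤ))) ((0 : ℝ), (0 : ℝ))
      simp only [TcPerm, Equiv.Perm.inv_def, Equiv.coe_fn_mk, Equiv.coe_fn_symm_mk,
        Prod.mk.injEq]
      constructor <;> ring

/-- For `c ≥ 1`, the segment joining `P_{1-i}` to `P_i` has slope one: its displacement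
vector is a scalar multiple of `(1,1)`, provided the endpoints are distinct. -/
theorem stmt5 (c : ℝ) (hc : 1 ≤ c) (i : ℤ)
    (hne : (TcPerm c ^ (1 - i)) ((0 : ℝ), (0 : ℝ)) ≠ (TcPerm c ^ i) ((0 : ℝ), (0 : ℝ))) :
    ∃ l : ℝ, (TcPerm c ^ i) ((0 : ℝ), (0 : ℝ)) - (TcPerm c ^ (1 - i)) ((0 : ℝ), (0 : ℝ))
      = l • ((1 : ℝ), (1 : ℝ)) := by
  have h1 : (1 - i : ℤ) = 1 + -i := by ring
  rw [h1, zpow_add, zpow_one]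
  simp only [Equiv.Perm.mul_apply, tc_neg c i]
  obtain ⟨x, y⟩ := (TcPerm c ^ i) ((0 : ℝ), (0 : ℝ))
  refine ⟨(c + 1) * x + (1 - c) * y - 1, ?_⟩
  simp only [TcPerm, Equiv.coe_fn_mk, Prod.smul_mk, smul_eq_mul, Prod.mk_sub_mk, Prod.mk.injEq]
  constructor <;> ring
end

section
/- The matrices D₁ = [[1,2],[0,1]] and E₁ = [[-1,2],[-2,3]] generate a free subgroup of SL(2,ℝ) (no nontrivial reduced word in D₁ and E₁ equals the identity). -/
/-- `D₁ = [[1,2],[0,1]]` as an element of `SL(2,ℝ)`. -/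
def D1R : Matrix.SpecialLinearGroup (Fin 2) ℝ :=
  ⟨!![1, 2; 0, 1], by norm_num [Matrix.det_fin_two_of]⟩

/-- `E₁ = [[-1,2],[-2,3]]` as an element of `SL(2,ℝ)`. -/
def E1R : Matrix.SpecialLinearGroup (Fin 2) ℝ :=
  ⟨!![-1, 2; -2, 3], by norm_num [Matrix.det_fin_two_of]⟩

/-- Nonzero vectors of `ℝ²`. -/
def PPV : Type := {p : ℝ × ℝ // p ≠ 0}

namespace PPV

noncomputable def smulAux (g : Matrix.SpecialLinearGroup (Fin 2) ℝ) (p : PPV) : PPV :=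
  ⟨(g.1 0 0 * p.1.1 + g.1 0 1 * p.1.2, g.1 1 0 * p.1.1 + g.1 1 1 * p.1.2), by
    have hdet : g.1 0 0 * g.1 1 1 - g.1 0 1 * g.1 1 0 = 1 := by
      have := g.2; rwa [Matrix.det_fin_two] at this
    intro h
    rw [Prod.ext_iff] at h
    obtain ⟨h1, h2⟩ := h
    simp only [Prod.fst_zero, Prod.snd_zero] at h1 h2
    apply p.2
    have hx : p.1.1 = 0 := by
      linear_combination g.1 1 1 * h1 - g.1 0 1 * h2 - p.1.1 * hdet
    have hy : p.1.2 = 0 := by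
      linear_combination g.1 0 0 * h2 - g.1 1 0 * h1 - p.1.2 * hdet
    exact Prod.ext hx hy⟩

noncomputable instance : MulAction (Matrix.SpecialLinearGroup (Fin 2) ℝ) PPV where
  smul := smulAux
  one_smul p := by
    apply Subtype.ext
    show ((1 : Matrix.SpecialLinearGroup (Fin 2) ℝ).1 0 0 * p.1.1
        + (1 : Matrix.SpecialLinearGroup (Fin 2) ℝ).1 0 1 * p.1.2,
        (1 : Matrix.SpecialLinearGroup (Fin 2) ℝ).1 1 0 * p.1.1
        + (1 : Matrix.SpecialLinearGroup (Fin 2) ℝ).1 1 1 * p.1.2) = p.1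
    have h0 : (1 : Matrix.SpecialLinearGroup (Fin 2) ℝ).1 = (1 : Matrix (Fin 2) (Fin 2) ℝ) := rfl
    rw [h0]
    norm_num [Matrix.one_apply]
  mul_smul g h p := by
    apply Subtype.ext
    have hc : ((g * h : Matrix.SpecialLinearGroup (Fin 2) ℝ)).1 = g.1 * h.1 := rfl
    show ((g * h : Matrix.SpecialLinearGroup (Fin 2) ℝ).1 0 0 * p.1.1
        + (g * h : Matrix.SpecialLinearGroup (Fin 2) ℝ).1 0 1 * p.1.2,
        (g * h : Matrix.SpecialLinearGroup (Fin 2) ℝ).1 1 0 * p.1.1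
        + (g * h : Matrix.SpecialLinearGroup (Fin 2) ℝ).1 1 1 * p.1.2)
      = (smulAux g (smulAux h p)).1
    simp only [hc, Matrix.mul_apply, Fin.sum_univ_two, smulAux]
    rw [Prod.ext_iff]
    constructor <;> ring

lemma smul_fst (g : Matrix.SpecialLinearGroup (Fin 2) ℝ) (p : PPV) :
    (g • p).1.1 = g.1 0 0 * p.1.1 + g.1 0 1 * p.1.2 := rfl

lemma smul_snd (g : Matrix.SpecialLinearGroup (Fin 2) ℝ) (p : PPV) :
    (g • p).1.2 = g.1 1 0 * p.1.1 + g.1 1 1 * p.1.2 := rfl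

end PPV

/-- `u` coordinate. -/
def uu (p : PPV) : ℝ := p.1.2
/-- `v` coordinate. -/
def vv (p : PPV) : ℝ := p.1.2 - p.1.1

/-- ping-pong attracting sets -/
def Xpp : Bool → Set PPV
  | true => {p | uu p * vv p ≤ -(uu p)^2}
  | false => {p | (vv p)^2 ≤ uu p * vv p}

/-- ping-pong repelling sets -/
def Ypp : Bool → Set PPV
  | true => {p | (uu p)^2 < uu p * vv p}
  | false => {p | uu p * vv p < -(vv p)^2}

lemma D1_entries : D1R.1 0 0 = 1 ∧ D1R.1 0 1 = 2 ∧ D1R.1 1 0 = 0 ∧ D1R.1 1 1 = 1 := by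
  refine ⟨?_, ?_, ?_, ?_⟩ <;> simp [D1R]

lemma E1_entries : E1R.1 0 0 = -1 ∧ E1R.1 0 1 = 2 ∧ E1R.1 1 0 = -2 ∧ E1R.1 1 1 = 3 := by
  refine ⟨?_, ?_, ?_, ?_⟩ <;> simp [E1R]

lemma pp_nonzero (p : PPV) (h1 : uu p = 0) (h2 : vv p = 0) : False := by
  apply p.2
  have : p.1.1 = 0 := by unfold uu vv at *; linarith
  exact Prod.ext this h1

lemma Xdisj : Disjoint (Xpp true) (Xpp false) := by
  rw [Set.disjoint_left]
  intro p h1 h2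
  have h1' : uu p * vv p ≤ -(uu p)^2 := h1
  have h2' : (vv p)^2 ≤ uu p * vv p := h2
  have hu : uu p = 0 := by nlinarith [sq_nonneg (uu p), sq_nonneg (vv p)]
  have hv : vv p = 0 := by nlinarith [sq_nonneg (vv p)]
  exact pp_nonzero p hu hv

lemma Ydisj : Disjoint (Ypp true) (Ypp false) := by
  rw [Set.disjoint_left]
  intro p h1 h2
  have h1' : (uu p)^2 < uu p * vv p := h1
  have h2' : uu p * vv p < -(vv p)^2 := h2
  nlinarith [sq_nonneg (uu p), sq_nonneg (vv p)]

lemma XYdisj : ∀ i j, Disjoint (Xpp i) (Ypp j) := by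
  intro i j
  rw [Set.disjoint_left]
  intro p h1 h2
  cases i <;> cases j
  · have h1' : (vv p)^2 ≤ uu p * vv p := h1
    have h2' : uu p * vv p < -(vv p)^2 := h2
    nlinarith [sq_nonneg (vv p)]
  · have h1' : (vv p)^2 ≤ uu p * vv p := h1
    have h2' : (uu p)^2 < uu p * vv p := h2
    nlinarith [sq_nonneg (uu p - vv p)]
  · have h1' : uu p * vv p ≤ -(uu p)^2 := h1
    have h2' : uu p * vv p < -(vv p)^2 := h2
    nlinarith [sq_nonneg (uu p + vv p)]
  · have h1' : uu p * vv p ≤ -(uu p)^2 := h1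
    have h2' : (uu p)^2 < uu p * vv p := h2
    nlinarith [sq_nonneg (uu p)]

/-- `D₁` and `E₁` generate a free subgroup of `SL(2,ℝ)`: the homomorphism from the free
group on two generators sending them to `D₁` and `E₁` is injective, i.e. no nontrivial
reduced word in `D₁`, `E₁` equals the identity. -/
theorem stmt13 :
    Function.Injective (FreeGroup.lift (fun b : Bool => if b then D1R else E1R)) := by
  obtain ⟨d1, d2, d3, d4⟩ := D1_entries
  obtain ⟨e1, e2, e3, e4⟩ := E1_entries
  apply FreeGroup.injective_lift_of_ping_pong _ Xpp Ypp
  · -- nonempty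
    intro i
    cases i
    · exact ⟨⟨(0, 1), by simp [Prod.ext_iff]⟩, by
        show (vv _)^2 ≤ uu _ * vv _
        norm_num [uu, vv]⟩
    · exact ⟨⟨(1, 0), by simp [Prod.ext_iff]⟩, by
        show uu _ * vv _ ≤ -(uu _)^2
        norm_num [uu, vv]⟩
  · -- X pairwise disjoint
    intro i j hij
    cases i <;> cases j
    · exact absurd rfl hij
    · exact Xdisj.symm
    · exact Xdisj
    · exact absurd rfl hij
  · -- Y pairwise disjoint
    intro i j hij
    cases i <;> cases j
    · exact absurd rfl hij
    · exact Ydisj.symm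
    · exact Ydisj
    · exact absurd rfl hij
  · exact XYdisj
  · -- hX : a i • (Y i)ᶜ ⊆ X i
    intro i x hx
    obtain ⟨p, hp, rfl⟩ := hx
    cases i
    · -- E
      have hp' : ¬ (uu p * vv p < -(vv p)^2) := hp
      rw [not_lt] at hp'
      show (vv (E1R • p))^2 ≤ uu (E1R • p) * vv (E1R • p)
      simp only [uu, vv, PPV.smul_fst, PPV.smul_snd, e1, e2, e3, e4]
      simp only [uu, vv] at hp'
      nlinarith
    · -- D
      have hp' : ¬ ((uu p)^2 < uu p * vv p) := hp
      rw [not_lt] at hp'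
      show uu (D1R • p) * vv (D1R • p) ≤ -(uu (D1R • p))^2
      simp only [uu, vv, PPV.smul_fst, PPV.smul_snd, d1, d2, d3, d4]
      simp only [uu, vv] at hp'
      nlinarith
  · -- hY : a⁻¹ i • (X i)ᶜ ⊆ Y i
    intro i x hx
    rw [Set.mem_smul_set_iff_inv_smul_mem] at hx
    simp only [Pi.inv_apply, inv_inv] at hx
    cases i
    · -- E
      have hx' : ¬ ((vv (E1R • x))^2 ≤ uu (E1R • x) * vv (E1R • x)) := hx
      rw [not_le] at hx'
      show uu x * vv x < -(vv x)^2
      simp only [uu, vv, PPV.smul_fst, PPV.smul_snd, e1, e2, e3, e4] at hx'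
      simp only [uu, vv]
      nlinarith
    · -- D
      have hx' : ¬ (uu (D1R • x) * vv (D1R • x) ≤ -(uu (D1R • x))^2) := hx
      rw [not_le] at hx'
      show (uu x)^2 < uu x * vv x
      simp only [uu, vv, PPV.smul_fst, PPV.smul_snd, d1, d2, d3, d4] at hx'
      simp only [uu, vv]
      nlinarith
end
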